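/- The special affine Fourier transform 𝓕_A is a bijection from the Schwartz space S(ℝ) onto itself. -/

import Mathlib

open MeasureTheory Complex

noncomputable def SAFT (a b d p q : ℝ) (f : ℝ → ℂ) (ω : ℝ) : ℂ :=
  (1 / Real.sqrt |b|) *
    ∫ t : ℝ, f t *
      Complex.exp ((Real.pi * Complex.I / b) *
        (a * t ^ 2 + 2 * p * t - 2 * ω * t + 2 * (b * q - d * p) * ω + d * ω ^ 2))

open SchwartzMap

noncomputable section SAFTAux

/-- Chirp function `exp(i·P(t))` for a real polynomial `P`. -/
def chirp (P : Polynomial ℝ) (t : ℝ) : ℂ := Complex.exp (Complex.I * (Complex.ofReal (P.eval t)))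

lemma norm_chirp (P : Polynomial ℝ) (t : ℝ) : ‖chirp P t‖ = 1 := by
  have : (Complex.I * (Complex.ofReal (P.eval t))).re = 0 := by simp
  simp [chirp, Complex.norm_exp, this]

lemma contDiff_polyEval (P : Polynomial ℝ) : ContDiff ℝ (⊤ : ℕ∞) fun x : ℝ => P.eval x := by
  induction P using Polynomial.induction_on' with
  | add p q hp hq => simpa [Polynomial.eval_add] using hp.add hq
  | monomial n a => simpa [Polynomial.eval_monomial] using contDiff_const.mul (contDiff_id.pow n)

lemma contDiff_chirp (P : Polynomial ℝ) : ContDiff ℝ (⊤ : ℕ∞) (chirp P) :=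
  Complex.contDiff_exp.comp
    (contDiff_const.mul (Complex.ofRealCLM.contDiff.comp (contDiff_polyEval P)))

lemma hasDerivAt_chirp (P : Polynomial ℝ) (t : ℝ) :
    HasDerivAt (chirp P) (Complex.I * Complex.ofReal (P.derivative.eval t) * chirp P t) t := by
  have h1 : HasDerivAt (fun s : ℝ => (Complex.ofReal (P.eval s)))
      (Complex.ofReal (P.derivative.eval t)) t := (P.hasDerivAt t).ofReal_comp
  have h2 := (h1.const_mul Complex.I).cexp
  convert h2 using 1
  · rfl
  simp only [chirp]; ring

lemma iteratedDeriv_chirp (P : Polynomial ℝ) (n : ℕ) :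
    ∃ Q : Polynomial ℂ, ∀ t : ℝ,
      iteratedDeriv n (chirp P) t = Q.eval (t : ℂ) * chirp P t := by
  induction n with
  | zero => exact ⟨1, by simp [iteratedDeriv_zero]⟩
  | succ n ih =>
    obtain ⟨Q, hQ⟩ := ih
    refine ⟨Q.derivative + Q * (Polynomial.C Complex.I *
      P.derivative.map (algebraMap ℝ ℂ)), fun t => ?_⟩
    rw [iteratedDeriv_succ]
    have heq : iteratedDeriv n (chirp P) = fun s : ℝ => Q.eval (s : ℂ) * chirp P s :=
      funext hQ
    rw [heq]
    have h1 : HasDerivAt (fun s : ℝ => Q.eval ((s : ℝ) : ℂ)) (Q.derivative.eval (t : ℂ)) t :=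
      (Q.hasDerivAt ((t : ℝ) : ℂ)).comp_ofReal
    have h3 := h1.mul (hasDerivAt_chirp P t)
    rw [show (fun s : ℝ => Q.eval (s : ℂ) * chirp P s) = (fun s : ℝ => Q.eval ((s : ℝ) : ℂ)) * chirp P from rfl, h3.deriv]
    have hmap : (P.derivative.map (algebraMap ℝ ℂ)).eval ((t : ℝ) : ℂ)
        = Complex.ofReal (P.derivative.eval t) := by
      rw [Polynomial.eval_map]
      exact Polynomial.eval₂_at_apply (algebraMap ℝ ℂ) t
    simp only [Polynomial.eval_add, Polynomial.eval_mul, Polynomial.eval_C, hmap]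
    ring

lemma polyEval_bound (Q : Polynomial ℂ) : ∃ C : ℝ, 0 ≤ C ∧
    ∀ x : ℝ, ‖Q.eval (x : ℂ)‖ ≤ C * (1 + ‖x‖) ^ Q.natDegree := by
  refine ⟨∑ i ∈ Finset.range (Q.natDegree + 1), ‖Q.coeff i‖, by positivity, fun x => ?_⟩
  rw [Polynomial.eval_eq_sum_range]
  refine (norm_sum_le _ _).trans ?_
  rw [Finset.sum_mul]
  refine Finset.sum_le_sum fun i hi => ?_
  rw [norm_mul, norm_pow]
  have h1 : ‖((x : ℝ) : ℂ)‖ ^ i ≤ (1 + ‖x‖) ^ Q.natDegree := by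
    have hx : ‖((x : ℝ) : ℂ)‖ = ‖x‖ := Complex.norm_real x
    rw [hx]
    calc ‖x‖ ^ i ≤ (1 + ‖x‖) ^ i :=
          pow_le_pow_left₀ (norm_nonneg x) (by linarith [norm_nonneg x]) i
      _ ≤ (1 + ‖x‖) ^ Q.natDegree :=
          pow_le_pow_right₀ (by linarith [norm_nonneg x])
            (Finset.mem_range_succ_iff.mp hi)
  exact mul_le_mul_of_nonneg_left h1 (norm_nonneg _)

lemma hasTemperateGrowth_chirp (P : Polynomial ℝ) :
    Function.HasTemperateGrowth (chirp P) := by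
  refine ⟨contDiff_chirp P, fun n => ?_⟩
  obtain ⟨Q, hQ⟩ := iteratedDeriv_chirp P n
  obtain ⟨C, hC0, hC⟩ := polyEval_bound Q
  refine ⟨Q.natDegree, C, fun x => ?_⟩
  rw [norm_iteratedFDeriv_eq_norm_iteratedDeriv, hQ, norm_mul, norm_chirp, mul_one]
  exact hC x

lemma chirp_neg_mul_chirp (P : Polynomial ℝ) (t : ℝ) : chirp P t * chirp (-P) t = 1 := by
  rw [chirp, chirp, ← Complex.exp_add]
  simp

/-- Multiplication by a chirp, as a continuous linear map on Schwartz space. -/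
def mulChirp (P : Polynomial ℝ) : 𝓢(ℝ, ℂ) →L[ℝ] 𝓢(ℝ, ℂ) :=
  SchwartzMap.bilinLeftCLM (ContinuousLinearMap.mul ℝ ℂ) (hasTemperateGrowth_chirp P)

lemma mulChirp_apply (P : Polynomial ℝ) (f : 𝓢(ℝ, ℂ)) (x : ℝ) :
    mulChirp P f x = f x * chirp P x := rfl

lemma mulChirp_cancel (P : Polynomial ℝ) (f : 𝓢(ℝ, ℂ)) :
    mulChirp (-P) (mulChirp P f) = f := by
  ext x
  rw [mulChirp_apply, mulChirp_apply, mul_assoc, chirp_neg_mul_chirp, mul_one]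

lemma mulChirp_cancel' (P : Polynomial ℝ) (f : 𝓢(ℝ, ℂ)) :
    mulChirp P (mulChirp (-P) f) = f := by
  have := mulChirp_cancel (-P) f
  rwa [neg_neg] at this

/-- The scaling `x ↦ x * c`, as a continuous linear equiv on `ℝ`. -/
def scaleEquiv (c : ℝ) (hc : c ≠ 0) : ℝ ≃L[ℝ] ℝ :=
  ContinuousLinearEquiv.unitsEquivAut ℝ (Units.mk0 c hc)

/-- Composition with the scaling `x ↦ x * c`, as a continuous linear map on Schwartz space. -/
def compScale (c : ℝ) (hc : c ≠ 0) : 𝓢(ℝ, ℂ) →L[ℝ] 𝓢(ℝ, ℂ) :=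
  SchwartzMap.compCLMOfContinuousLinearEquiv ℝ (scaleEquiv c hc)

lemma compScale_apply (c : ℝ) (hc : c ≠ 0) (f : 𝓢(ℝ, ℂ)) (x : ℝ) :
    compScale c hc f x = f (x * c) := rfl

lemma compScale_cancel (c : ℝ) (hc : c ≠ 0) (f : 𝓢(ℝ, ℂ)) :
    compScale c⁻¹ (inv_ne_zero hc) (compScale c hc f) = f := by
  ext x
  rw [compScale_apply, compScale_apply, inv_mul_cancel_right₀ hc]

lemma compScale_cancel' (c : ℝ) (hc : c ≠ 0) (f : 𝓢(ℝ, ℂ)) :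
    compScale c hc (compScale c⁻¹ (inv_ne_zero hc) f) = f := by
  ext x
  rw [compScale_apply, compScale_apply, mul_inv_cancel_right₀ hc]

/-- Chirp polynomial in the time variable. -/
def saftP1 (a b p : ℝ) : Polynomial ℝ :=
  Polynomial.C (Real.pi * a / b) * Polynomial.X ^ 2 +
    Polynomial.C (2 * Real.pi * p / b) * Polynomial.X

/-- Chirp polynomial in the frequency variable. -/
def saftP2 (b d p q : ℝ) : Polynomial ℝ :=
  Polynomial.C (Real.pi * d / b) * Polynomial.X ^ 2 +
    Polynomial.C (2 * Real.pi * (b * q - d * p) / b) * Polynomial.X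

/-- The SAFT as a map of the Schwartz space to itself. -/
def saftT (a b d p q : ℝ) (hb : b ≠ 0) (f : 𝓢(ℝ, ℂ)) : 𝓢(ℝ, ℂ) :=
  (1 / Real.sqrt |b| : ℝ) • mulChirp (saftP2 b d p q)
    (compScale b⁻¹ (inv_ne_zero hb)
      (fourierTransformCLE ℝ 𝓢(ℝ, ℂ) (mulChirp (saftP1 a b p) f)))

/-- The inverse SAFT on the Schwartz space. -/
def saftS (a b d p q : ℝ) (hb : b ≠ 0) (g : 𝓢(ℝ, ℂ)) : 𝓢(ℝ, ℂ) :=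
  mulChirp (-(saftP1 a b p))
    ((fourierTransformCLE ℝ 𝓢(ℝ, ℂ)).symm
      (compScale b hb ((Real.sqrt |b| : ℝ) • mulChirp (-(saftP2 b d p q)) g)))

lemma sqrt_abs_ne_zero {b : ℝ} (hb : b ≠ 0) : Real.sqrt |b| ≠ 0 := by
  positivity

lemma saftS_saftT (a b d p q : ℝ) (hb : b ≠ 0) (f : 𝓢(ℝ, ℂ)) :
    saftS a b d p q hb (saftT a b d p q hb f) = f := by
  rw [saftT, saftS]
  simp only [_root_.map_smul, mulChirp_cancel, compScale_cancel',
    ContinuousLinearEquiv.symm_apply_apply, smul_smul]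
  rw [mul_one_div, div_self (sqrt_abs_ne_zero hb), one_smul]

lemma saftT_saftS (a b d p q : ℝ) (hb : b ≠ 0) (g : 𝓢(ℝ, ℂ)) :
    saftT a b d p q hb (saftS a b d p q hb g) = g := by
  rw [saftS, saftT]
  simp only [_root_.map_smul, mulChirp_cancel', ContinuousLinearEquiv.apply_symm_apply,
    compScale_cancel, smul_smul]
  rw [one_div, inv_mul_cancel₀ (sqrt_abs_ne_zero hb), one_smul]

lemma saftT_eq (a b d p q : ℝ) (hb : b ≠ 0) (f : 𝓢(ℝ, ℂ)) :
    SAFT a b d p q ⇑f = ⇑(saftT a b d p q hb f) := by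
  funext ω
  have hbC : (b : ℂ) ≠ 0 := Complex.ofReal_ne_zero.mpr hb
  rw [saftT]
  rw [SchwartzMap.smul_apply, mulChirp_apply, compScale_apply,
    fourierTransformCLE, FourierTransform.fourierCLE_apply, SchwartzMap.fourier_coe, Real.fourier_real_eq_integral_exp_smul]
  simp only [smul_eq_mul, mulChirp_apply, SAFT]
  rw [← MeasureTheory.integral_mul_const]
  rw [show ((1 / Real.sqrt |b| : ℝ) • (∫ v : ℝ,
      Complex.exp (↑(-2 * Real.pi * v * (ω * b⁻¹)) * Complex.I) * (f v * chirp (saftP1 a b p) v)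
        * chirp (saftP2 b d p q) ω) : ℂ)
    = (1 / (Real.sqrt |b| : ℂ)) * ∫ v : ℝ,
      Complex.exp (↑(-2 * Real.pi * v * (ω * b⁻¹)) * Complex.I) * (f v * chirp (saftP1 a b p) v)
        * chirp (saftP2 b d p q) ω by
    rw [Complex.real_smul]; push_cast; ring]
  congr 1
  congr 1
  funext t
  rw [chirp, chirp]
  have hE : (Real.pi * Complex.I / b) *
      ((a : ℂ) * t ^ 2 + 2 * p * t - 2 * ω * t + 2 * (b * q - d * p) * ω + d * ω ^ 2)
      = (↑(-2 * Real.pi * t * (ω * b⁻¹)) * Complex.I)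
        + Complex.I * Complex.ofReal ((saftP1 a b p).eval t)
        + Complex.I * Complex.ofReal ((saftP2 b d p q).eval ω) := by
    simp only [saftP1, saftP2, Polynomial.eval_add, Polynomial.eval_mul, Polynomial.eval_pow,
      Polynomial.eval_C, Polynomial.eval_X]
    push_cast
    field_simp
    ring
  rw [hE, Complex.exp_add, Complex.exp_add]
  ring

end SAFTAux

/-- The SAFT maps the Schwartz space into itself, and is a bijection of the Schwartz space
onto itself. -/
theorem SAFT_bijective_schwartz (a b c d p q : ℝ) (hb : b ≠ 0) (hA : a * d - b * c = 1) :
    (∀ f : SchwartzMap ℝ ℂ, ∃ g : SchwartzMap ℝ ℂ, SAFT a b d p q (⇑f) = ⇑g) ∧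
    (∀ g : SchwartzMap ℝ ℂ, ∃! f : SchwartzMap ℝ ℂ, SAFT a b d p q (⇑f) = ⇑g) := by
  constructor
  · intro f
    exact ⟨saftT a b d p q hb f, saftT_eq a b d p q hb f⟩
  · intro g
    refine ⟨saftS a b d p q hb g, ?_, ?_⟩
    · show SAFT a b d p q ⇑(saftS a b d p q hb g) = ⇑g
      rw [saftT_eq a b d p q hb (saftS a b d p q hb g), saftT_saftS]
    · intro f' hf'
      have hTf' : saftT a b d p q hb f' = g :=
        DFunLike.coe_injective ((saftT_eq a b d p q hb f').symm.trans hf')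
      calc f' = saftS a b d p q hb (saftT a b d p q hb f') :=
            (saftS_saftT a b d p q hb f').symm
        _ = saftS a b d p q hb g := by rw [hTf']
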